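/- Let f be a bent Boolean function on F_2^{2m} with m ≥ 1, with dual f̂, and let x ∈ F_2^{2m} with x ≠ 0. Write N(x) for the cardinality of {y ∈ F_2^{2m} | f(y) = 1 and ⟨x,y⟩ = 1} (the weight of the codeword of the linear code C(f) corresponding to x). Then: if wt(f) = 2^{2m-1} - 2^{m-1}, N(x) = 2^{2m-2} when f̂(x) = 0 and N(x) = 2^{2m-2} - 2^{m-1} when f̂(x) = 1; if wt(f) = 2^{2m-1} + 2^{m-1}, N(x) = 2^{2m-2} + 2^{m-1} when f̂(x) = 0 and N(x) = 2^{2m-2} when f̂(x) = 1. Hence C(f) is a two-weight code with nonzero codeword weights {2^{2m-2}, 2^{2m-2} - 2^{m-1}} in the first case and {2^{2m-2}, 2^{2m-2} + 2^{m-1}} in the second. -/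

import Mathlib

open Finset

/-- Inner product on `F_2^n`. -/
def dotp {n : ℕ} (x y : Fin n → ZMod 2) : ZMod 2 := ∑ i, x i * y i

/-- Hamming weight of a Boolean function: the cardinality of its support. -/
def wt {n : ℕ} (f : (Fin n → ZMod 2) → ZMod 2) : ℕ :=
  (Finset.univ.filter fun x => f x = 1).card

/-- Walsh–Hadamard transform of a Boolean function. -/
def walsh {n : ℕ} (f : (Fin n → ZMod 2) → ZMod 2) (x : Fin n → ZMod 2) : ℤ :=
  ∑ y : Fin n → ZMod 2, (-1 : ℤ) ^ (f y + dotp x y).val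

/-- A Boolean function on `F_2^(2m)` is bent if its Walsh–Hadamard transform has constant
absolute value `2^m`. -/
def IsBent {m : ℕ} (f : (Fin (2 * m) → ZMod 2) → ZMod 2) : Prop :=
  ∀ x, |walsh f x| = 2 ^ m

/-- The dual of a bent function: `f̂ x = 0` if `W_f x = 2^m`, and `1` otherwise
(for bent `f` the other case is exactly `W_f x = -2^m`). -/
def dual {m : ℕ} (f : (Fin (2 * m) → ZMod 2) → ZMod 2) :
    (Fin (2 * m) → ZMod 2) → ZMod 2 :=
  fun x => if walsh f x = 2 ^ m then 0 else 1

/-- The weight class of a bent function on `F_2^(2m)`: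
`0` if its weight is `2^(2m-1) - 2^(m-1)`, and `1` otherwise. -/
def wc {m : ℕ} (f : (Fin (2 * m) → ZMod 2) → ZMod 2) : ZMod 2 :=
  if wt f = 2 ^ (2 * m - 1) - 2 ^ (m - 1) then 0 else 1

/-- The Cayley graph of a Boolean function: distinct `x`, `y` are adjacent iff `f (x+y) = 1`. -/
def cayley {n : ℕ} (f : (Fin n → ZMod 2) → ZMod 2) : SimpleGraph (Fin n → ZMod 2) where
  Adj x y := x ≠ y ∧ f (x + y) = 1
  symm := ⟨fun x y h => ⟨h.1.symm, by rw [add_comm]; exact h.2⟩⟩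
  loopless := ⟨fun x h => h.1 rfl⟩

instance cayleyAdjDecidable {n : ℕ} (f : (Fin n → ZMod 2) → ZMod 2) :
    DecidableRel (cayley f).Adj :=
  fun x y => inferInstanceAs (Decidable (x ≠ y ∧ f (x + y) = 1))

/-- The weight of the codeword of `C(f)` corresponding to `x`:
`|{y | f y = 1 ∧ ⟨x,y⟩ = 1}|`. -/
def codewordWeight {m : ℕ} (f : (Fin (2 * m) → ZMod 2) → ZMod 2)
    (x : Fin (2 * m) → ZMod 2) : ℕ :=
  (Finset.univ.filter fun y => f y = 1 ∧ dotp x y = 1).card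

lemma pointwise (a b : ZMod 2) :
    ((-1:ℤ)) ^ (a + b).val
      = 1 - 2 * (if a = 1 then (1:ℤ) else 0) - 2 * (if b = 1 then (1:ℤ) else 0)
        + 4 * (if a = 1 ∧ b = 1 then (1:ℤ) else 0) := by
  have : ∀ c d : Prop, True := fun _ _ => trivial
  revert a b
  decide

lemma walsh_key {n : ℕ} (f : (Fin n → ZMod 2) → ZMod 2) (x : Fin n → ZMod 2) :
    walsh f x = 2 ^ n - 2 * ((univ.filter fun y => f y = 1).card : ℤ)
      - 2 * ((univ.filter fun y => dotp x y = 1).card : ℤ)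
      + 4 * ((univ.filter fun y => f y = 1 ∧ dotp x y = 1).card : ℤ) := by
  unfold walsh
  simp_rw [pointwise]
  rw [Finset.sum_add_distrib, Finset.sum_sub_distrib, Finset.sum_sub_distrib,
    ← Finset.mul_sum, ← Finset.mul_sum, ← Finset.mul_sum,
    Finset.sum_boole, Finset.sum_boole, Finset.sum_boole, Finset.sum_const]
  simp [Fintype.card_fun, mul_comm]

lemma dotp_half {n : ℕ} (x : Fin n → ZMod 2) (hx : x ≠ 0) :
    2 * (univ.filter fun y => dotp x y = 1).card = 2 ^ n := by
  obtain ⟨i, hi⟩ : ∃ i, x i ≠ 0 := by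
    by_contra h; push_neg at h; exact hx (funext fun i => h i)
  have hxi : x i = 1 := by revert hi; generalize x i = a; revert a; decide
  have key : ∀ y, dotp x (y + Pi.single i 1) = dotp x y + 1 := by
    intro y
    simp only [dotp, Pi.add_apply, mul_add, Finset.sum_add_distrib]
    congr 1
    simp [Pi.single_apply, mul_ite, Finset.sum_ite_eq', hxi]
  have hss : ∀ y : Fin n → ZMod 2, y + Pi.single i 1 + Pi.single i 1 = y := by
    intro y
    funext j
    simp only [Pi.add_apply]
    rw [add_assoc, CharTwo.add_self_eq_zero, add_zero]
  have hflip : ∀ a : ZMod 2, (a = 1 ↔ ¬ (a + 1 = 1)) := by decide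
  have hcard : (univ.filter fun y => dotp x y = 1).card
      = (univ.filter fun y => ¬ dotp x y = 1).card := by
    refine Finset.card_bij' (fun y _ => y + Pi.single i 1) (fun y _ => y + Pi.single i 1) ?_ ?_ ?_ ?_
    · intro a ha
      simp only [mem_filter, mem_univ, true_and] at ha ⊢
      rw [key]
      exact (hflip _).mp ha
    · intro a ha
      simp only [mem_filter, mem_univ, true_and] at ha ⊢
      rw [key]
      revert ha
      generalize dotp x a = b
      revert b; decide
    · intro a _; exact hss a
    · intro a _; exact hss a
  have := Finset.card_filter_add_card_filter_not
    (s := (univ : Finset (Fin n → ZMod 2))) (p := fun y => dotp x y = 1)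
  simp only [Finset.card_univ, Fintype.card_fun, Fintype.card_fin] at this
  rw [← hcard] at this
  simp [ZMod.card] at this
  omega

/-- the weights of nonzero codewords of the linear code of a bent function. -/
theorem bent_code_two_weight {m : ℕ} (hm : 1 ≤ m)
    (f : (Fin (2 * m) → ZMod 2) → ZMod 2) (hf : IsBent f)
    (x : Fin (2 * m) → ZMod 2) (hx : x ≠ 0) :
    (wt f = 2 ^ (2 * m - 1) - 2 ^ (m - 1) →
      (dual f x = 0 → codewordWeight f x = 2 ^ (2 * m - 2)) ∧
      (dual f x = 1 → codewordWeight f x = 2 ^ (2 * m - 2) - 2 ^ (m - 1)) ∧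
      (codewordWeight f x = 2 ^ (2 * m - 2) ∨
        codewordWeight f x = 2 ^ (2 * m - 2) - 2 ^ (m - 1))) ∧
    (wt f = 2 ^ (2 * m - 1) + 2 ^ (m - 1) →
      (dual f x = 0 → codewordWeight f x = 2 ^ (2 * m - 2) + 2 ^ (m - 1)) ∧
      (dual f x = 1 → codewordWeight f x = 2 ^ (2 * m - 2)) ∧
      (codewordWeight f x = 2 ^ (2 * m - 2) ∨
        codewordWeight f x = 2 ^ (2 * m - 2) + 2 ^ (m - 1))) := by
  obtain ⟨k, rfl⟩ : ∃ k, m = k + 1 := ⟨m - 1, by omega⟩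
  -- key integer identity: W = 4*c - 2*w
  have hdcard : 2 * ((univ.filter fun y => dotp x y = 1).card : ℤ) = 2 ^ (2 * (k + 1)) := by
    exact_mod_cast congrArg (Nat.cast : ℕ → ℤ) (dotp_half x hx)
  have hkey : walsh f x = 4 * (codewordWeight f x : ℤ) - 2 * (wt f : ℤ) := by
    rw [walsh_key f x]
    unfold codewordWeight wt
    linarith [hdcard]
  have hdual0 : dual f x = 0 → walsh f x = 2 ^ (k + 1) := by
    intro h
    by_contra hne
    simp [dual, hne] at h
  have hdual1 : dual f x = 1 → walsh f x = -(2 ^ (k + 1)) := by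
    intro h
    rcases abs_eq (by positivity : (0:ℤ) ≤ 2 ^ (k+1)) |>.mp (hf x) with h' | h'
    · simp [dual, h'] at h
    · exact h'
  have hdd : dual f x = 0 ∨ dual f x = 1 := by
    generalize dual f x = d; revert d; decide
  -- exponent simplifications
  have e1 : 2 * (k + 1) - 1 = 2 * k + 1 := by omega
  have e2 : 2 * (k + 1) - 2 = 2 * k := by omega
  have e3 : k + 1 - 1 = k := by omega
  rw [e1, e2, e3]
  set a : ℤ := 2 ^ k with ha
  have hpa : (0:ℤ) < a := by positivity
  have hp1 : ((2:ℤ)) ^ (k + 1) = 2 * a := by rw [pow_succ]; ring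
  have hp2 : ((2:ℤ)) ^ (2 * k) = a * a := by rw [two_mul, pow_add]
  have hp21 : ((2:ℤ)) ^ (2 * k + 1) = 2 * (a * a) := by rw [pow_succ, hp2]; ring
  have hle1 : 2 ^ k ≤ 2 ^ (2 * k + 1) := Nat.pow_le_pow_right (by norm_num) (by omega)
  have hle2 : 2 ^ k ≤ 2 ^ (2 * k) := Nat.pow_le_pow_right (by norm_num) (by omega)
  have hna : ((2 ^ k : ℕ) : ℤ) = a := by push_cast [ha]; ring
  have hn2k : ((2 ^ (2 * k) : ℕ) : ℤ) = a * a := by push_cast [← hp2]; ring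
  have hn2k1 : ((2 ^ (2 * k + 1) : ℕ) : ℤ) = 2 * (a * a) := by push_cast [← hp21]; ring
  constructor
  · intro hw
    have hwz : (wt f : ℤ) = 2 * (a * a) - a := by
      rw [hw, Nat.cast_sub hle1, hn2k1, hna]
    have h0 : dual f x = 0 → codewordWeight f x = 2 ^ (2 * k) := by
      intro h
      have hW := hdual0 h
      rw [hkey, hwz, hp1] at hW
      have : (codewordWeight f x : ℤ) = ((2 ^ (2 * k) : ℕ) : ℤ) := by
        rw [hn2k]; linarith
      exact_mod_cast this
    have h1 : dual f x = 1 → codewordWeight f x = 2 ^ (2 * k) - 2 ^ k := by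
      intro h
      have hW := hdual1 h
      rw [hkey, hwz, hp1] at hW
      have : (codewordWeight f x : ℤ) = ((2 ^ (2 * k) - 2 ^ k : ℕ) : ℤ) := by
        rw [Nat.cast_sub hle2, hn2k, hna]; linarith
      exact_mod_cast this
    exact ⟨h0, h1, by rcases hdd with h | h
                      · exact Or.inl (h0 h)
                      · exact Or.inr (h1 h)⟩
  · intro hw
    have hwz : (wt f : ℤ) = 2 * (a * a) + a := by
      rw [hw]; push_cast [hn2k1, hna]; ring
    have h0 : dual f x = 0 → codewordWeight f x = 2 ^ (2 * k) + 2 ^ k := by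
      intro h
      have hW := hdual0 h
      rw [hkey, hwz, hp1] at hW
      have : (codewordWeight f x : ℤ) = ((2 ^ (2 * k) + 2 ^ k : ℕ) : ℤ) := by
        push_cast [hn2k, hna]; linarith
      exact_mod_cast this
    have h1 : dual f x = 1 → codewordWeight f x = 2 ^ (2 * k) := by
      intro h
      have hW := hdual1 h
      rw [hkey, hwz, hp1] at hW
      have : (codewordWeight f x : ℤ) = ((2 ^ (2 * k) : ℕ) : ℤ) := by
        rw [hn2k]; linarith
      exact_mod_cast this
    exact ⟨h0, h1, by rcases hdd with h | h
                      · exact Or.inr (h0 h)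
                      · exact Or.inl (h1 h)⟩
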